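/- arXiv:1810.05522 — 2 statements merged into one kernel-verified Lean document; each statement's English description precedes it below -/
import Mathlib

section
/- Let 1 ≤ m < N and let ρ = Σ_{k=0}^{N(d−1)} p_k |R_{N,d;k}⟩⟨R_{N,d;k}| with p_k ≥ 0. Then Γ_m(ρ) = Σ_{s=−m(d−1)}^{(N−m)(d−1)} A_s, where A_s = Σ_{k,l} p_{k+l+s} (|R_{m,d;k}⟩ ⊗ |R_{N−m,d;k+s}⟩)(⟨R_{m,d;l}| ⊗ ⟨R_{N−m,d;l+s}|), the indices k, l ranging over max{0,−s} ≤ k, l ≤ min{m(d−1), (N−m)(d−1)−s}. -/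
open scoped BigOperators ComplexConjugate ComplexOrder Matrix
noncomputable section
open MeasureTheory

namespace DSym

/-- Index set of the computational basis of `(ℂ^d)^{⊗N}`. -/
abbrev Idx (d N : ℕ) := Fin N → Fin d

/-- `|i| = i_1 + ⋯ + i_N`. -/
def wsum {d N : ℕ} (i : Idx d N) : ℕ := ∑ j, (i j : ℕ)

/-- `C(N,k)_d = #{i ∈ {0,…,d−1}^N : |i| = k}`. -/
def Ccount (d N k : ℕ) : ℕ := (Finset.univ.filter (fun i : Idx d N => wsum i = k)).card

/-- The D-symmetrizator `P_D`. -/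
def PD (d N : ℕ) : Matrix (Idx d N) (Idx d N) ℂ :=
  Matrix.of fun i j => if wsum i = wsum j then ((Ccount d N (wsum j) : ℂ))⁻¹ else 0

/-- The symmetrizator `P_S`. -/
def PS (d N : ℕ) : Matrix (Idx d N) (Idx d N) ℂ :=
  Matrix.of fun i j =>
    ((N.factorial : ℂ))⁻¹ *
      ((Finset.univ.filter (fun σ : Equiv.Perm (Fin N) => i = fun k => j (σ k))).card : ℂ)

/-- The product state `|ξ^1⟩⟨ξ^1| ⊗ ⋯ ⊗ |ξ^N⟩⟨ξ^N|` as a matrix. -/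
def prodProj {d N : ℕ} (ξ : Fin N → (Fin d → ℂ)) : Matrix (Idx d N) (Idx d N) ℂ :=
  Matrix.of fun i i' => ∏ j, ξ j (i j) * conj (ξ j (i' j))

/-- Full separability of a multipartite state. -/
def FullySep {d N : ℕ} (ρ : Matrix (Idx d N) (Idx d N) ℂ) : Prop :=
  ∃ (n : ℕ) (lam : Fin n → ℝ) (ξ : Fin n → Fin N → (Fin d → ℂ)),
    (∀ α, 0 < lam α) ∧ (∀ α j, ∑ x, Complex.normSq (ξ α j x) = 1) ∧
      ρ = ∑ α, (lam α : ℂ) • prodProj (ξ α)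

/-- The restricted Dicke vector `|R_{N,d;k}⟩`. -/
def Rvec (d N k : ℕ) : Idx d N → ℂ := fun i => if wsum i = k then 1 else 0

/-- The rank-one operator `|R_{N,d;k}⟩⟨R_{N,d;k}|`. -/
def RProj (d N k : ℕ) : Matrix (Idx d N) (Idx d N) ℂ :=
  Matrix.vecMulVec (Rvec d N k) (star (Rvec d N k))

/-- Diagonal restricted Dicke state with coefficients `p`. -/
def dickeDiag (d N : ℕ) (p : ℕ → ℝ) : Matrix (Idx d N) (Idx d N) ℂ :=
  ∑ k ∈ Finset.range (N * (d - 1) + 1), (p k : ℂ) • RProj d N k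

/-- Partial transposition of the first `m` tensor factors (entrywise). -/
def Gamma {d N : ℕ} (m : ℕ) (ρ : Matrix (Idx d N) (Idx d N) ℂ) :
    Matrix (Idx d N) (Idx d N) ℂ :=
  Matrix.of fun i j =>
    ρ (fun k => if (k : ℕ) < m then j k else i k) (fun k => if (k : ℕ) < m then i k else j k)

/-- D-symmetry of a state: `ρ = P_D ρ P_D`. -/
def IsDSymm {d N : ℕ} (ρ : Matrix (Idx d N) (Idx d N) ℂ) : Prop :=
  ρ = PD d N * ρ * PD d N

/-- A pure fully separable D-symmetric state `σ = (|ξ⟩⟨ξ|)^{⊗N}`, `ξ` a unit vector. -/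
def PureDSymmProd {d N : ℕ} (σ : Matrix (Idx d N) (Idx d N) ℂ) : Prop :=
  ∃ ξ : Fin d → ℂ,
    (∑ x, Complex.normSq (ξ x) = 1) ∧ σ = prodProj (fun _ : Fin N => ξ) ∧ IsDSymm σ

/-- Entanglement witness for the D-symmetric system. -/
def IsDWitness {d N : ℕ} (W : Matrix (Idx d N) (Idx d N) ℂ) : Prop :=
  W.IsHermitian ∧ W = PD d N * W * PD d N ∧
    ∀ σ : Matrix (Idx d N) (Idx d N) ℂ, PureDSymmProd σ → 0 ≤ (W * σ).trace

/-- The dual restricted Dicke vector. -/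
def Rtilde (d N k : ℕ) : Idx d N → ℂ := ((Ccount d N k : ℂ))⁻¹ • Rvec d N k

/-- Solution of the generalized moment problem on `[0,∞)`. -/
def IsGenMomentSolution (n : ℕ) (p : ℕ → ℝ) : Prop :=
  ∃ (σ : Measure ℝ) (M : ℝ), IsFiniteMeasure σ ∧ σ {x | x < 0} = 0 ∧
    (∀ k ≤ n, Integrable (fun t => t ^ k) σ) ∧ 0 ≤ M ∧
    (∀ k < n, p k = ∫ t, t ^ k ∂σ) ∧ p n = (∫ t, t ^ n ∂σ) + M

/-- Solution of the strict moment problem on `[0,∞)`. -/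
def IsStrictMomentSolution (n : ℕ) (p : ℕ → ℝ) : Prop :=
  ∃ σ : Measure ℝ, IsFiniteMeasure σ ∧ σ {x | x < 0} = 0 ∧
    (∀ k ≤ n, Integrable (fun t => t ^ k) σ) ∧ (∀ k ≤ n, p k = ∫ t, t ^ k ∂σ)


/-- The normalization constant `C_z = (Σ_{i=0}^{d−1} |z|^{2i})^{−1/2}`. -/
def Cz (d : ℕ) (z : ℂ) : ℝ := (∑ j ∈ Finset.range d, ‖z‖ ^ (2 * j)) ^ (-(1/2 : ℝ))

/-- The vector `ζ_z = C_z Σ_{i=0}^{d−1} z^i |i⟩`. -/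
def zeta (d : ℕ) (z : ℂ) : Fin d → ℂ := fun i => (Cz d z : ℂ) * z ^ (i : ℕ)

/-- The basis vector `|d−1⟩`. -/
def topVec (d : ℕ) : Fin d → ℂ := fun x => if (x : ℕ) = d - 1 then 1 else 0

/-- Sum of the first `m` coordinates of a tuple. -/
def wsumFirst {d N : ℕ} (m : ℕ) (i : Idx d N) : ℕ :=
  ∑ j ∈ Finset.univ.filter (fun j : Fin N => (j : ℕ) < m), (i j : ℕ)

/-- Sum of the last `N − m` coordinates of a tuple. -/
def wsumLast {d N : ℕ} (m : ℕ) (i : Idx d N) : ℕ :=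
  ∑ j ∈ Finset.univ.filter (fun j : Fin N => m ≤ (j : ℕ)), (i j : ℕ)

/-- The vector `|R_{m,d;a}⟩ ⊗ |R_{N−m,d;b}⟩`, viewed inside `(ℂ^d)^{⊗N}`. -/
def splitVec (d N m : ℕ) (a b : ℤ) : Idx d N → ℂ :=
  fun i => if (wsumFirst m i : ℤ) = a ∧ (wsumLast m i : ℤ) = b then 1 else 0

/-- The operator `A_s` from the decomposition of `Γ_m(ρ)`. -/
def Amat (d N m : ℕ) (p : ℕ → ℝ) (s : ℤ) : Matrix (Idx d N) (Idx d N) ℂ :=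
  ∑ k ∈ Finset.Icc (max 0 (-s)) (min ((m : ℤ) * ((d : ℤ) - 1)) ((((N : ℤ) - (m : ℤ)) * ((d : ℤ) - 1)) - s)),
  ∑ l ∈ Finset.Icc (max 0 (-s)) (min ((m : ℤ) * ((d : ℤ) - 1)) ((((N : ℤ) - (m : ℤ)) * ((d : ℤ) - 1)) - s)),
    (p (k + l + s).toNat : ℂ) •
      Matrix.vecMulVec (splitVec d N m k (k + s)) (star (splitVec d N m l (l + s)))

/-- The permutation unitary `F_σ`, `F_σ|ξ_1,…,ξ_N⟩ = |ξ_{σ⁻¹(1)},…,ξ_{σ⁻¹(N)}⟩`. -/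
def Fmat (d N : ℕ) (σ : Equiv.Perm (Fin N)) : Matrix (Idx d N) (Idx d N) ℂ :=
  Matrix.of fun x i => if x = fun k => i (σ.symm k) then 1 else 0

/-- Partial transposition with respect to the binary string `b`. -/
def partialT {d N : ℕ} (b : Fin N → Bool) (ρ : Matrix (Idx d N) (Idx d N) ℂ) :
    Matrix (Idx d N) (Idx d N) ℂ :=
  Matrix.of fun i j => ρ (fun k => if b k then j k else i k) (fun k => if b k then i k else j k)

end DSym
end


namespace DSym

lemma wsum_split {d N : ℕ} (m : ℕ) (i : Idx d N) :
    wsum i = wsumFirst m i + wsumLast m i := by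
  unfold wsum wsumFirst wsumLast
  rw [← Finset.sum_filter_add_sum_filter_not Finset.univ (fun j : Fin N => (j : ℕ) < m)]
  congr 1
  apply Finset.sum_congr _ (fun _ _ => rfl)
  ext j; simp [not_lt]

lemma filter_lt_card {N m : ℕ} (hm : m ≤ N) :
    (Finset.univ.filter fun j : Fin N => (j : ℕ) < m).card = m := by
  have : (Finset.univ.filter fun j : Fin N => (j : ℕ) < m) =
      Finset.map ⟨Fin.castLE hm, Fin.castLE_injective hm⟩ Finset.univ := by
    ext j
    simp only [Finset.mem_filter, Finset.mem_univ, true_and, Finset.mem_map,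
      Function.Embedding.coeFn_mk]
    constructor
    · intro h; exact ⟨⟨(j : ℕ), h⟩, by ext; simp⟩
    · rintro ⟨a, rfl⟩; simpa using a.isLt
  simp [this]

lemma filter_ge_card {N m : ℕ} (hm : m ≤ N) :
    (Finset.univ.filter fun j : Fin N => m ≤ (j : ℕ)).card = N - m := by
  have h := Finset.card_filter_add_card_filter_not
    (s := (Finset.univ : Finset (Fin N))) (p := fun j : Fin N => (j : ℕ) < m)
  have h2 : (Finset.univ.filter fun j : Fin N => ¬ (j : ℕ) < m) =
      (Finset.univ.filter fun j : Fin N => m ≤ (j : ℕ)) := by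
    apply Finset.filter_congr; intro j _; simp [not_lt]
  rw [filter_lt_card hm, h2] at h
  simp only [Finset.card_univ, Fintype.card_fin] at h
  omega

lemma wsumFirst_le {d N : ℕ} {m : ℕ} (hm : m ≤ N) (i : Idx d N) :
    wsumFirst m i ≤ m * (d - 1) := by
  calc wsumFirst m i ≤ (Finset.univ.filter fun j : Fin N => (j : ℕ) < m).card * (d - 1) := by
        apply Finset.sum_le_card_nsmul
        intro j _
        exact Nat.le_sub_one_of_lt (i j).isLt
    _ = m * (d - 1) := by rw [filter_lt_card hm]

lemma wsumLast_le {d N : ℕ} {m : ℕ} (hm : m ≤ N) (i : Idx d N) :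
    wsumLast m i ≤ (N - m) * (d - 1) := by
  calc wsumLast m i ≤ (Finset.univ.filter fun j : Fin N => m ≤ (j : ℕ)).card * (d - 1) := by
        apply Finset.sum_le_card_nsmul
        intro j _
        exact Nat.le_sub_one_of_lt (i j).isLt
    _ = (N - m) * (d - 1) := by rw [filter_ge_card hm]

lemma wsumFirst_mix {d N : ℕ} (m : ℕ) (i j : Idx d N) :
    wsumFirst m (fun k => if (k : ℕ) < m then j k else i k) = wsumFirst m j := by
  unfold wsumFirst
  apply Finset.sum_congr rfl
  intro k hk
  simp only [Finset.mem_filter] at hk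
  simp [hk.2]

lemma wsumLast_mix {d N : ℕ} (m : ℕ) (i j : Idx d N) :
    wsumLast m (fun k => if (k : ℕ) < m then j k else i k) = wsumLast m i := by
  unfold wsumLast
  apply Finset.sum_congr rfl
  intro k hk
  simp only [Finset.mem_filter] at hk
  simp [Nat.not_lt.mpr hk.2]

theorem stmt11 (d N m : ℕ) (hd : 2 ≤ d) (hm : 1 ≤ m) (hmN : m < N) (p : ℕ → ℝ)
    (hp : ∀ k ≤ N * (d - 1), 0 ≤ p k) :
    Gamma m (dickeDiag d N p) =
      ∑ s ∈ Finset.Icc (-((m : ℤ) * ((d : ℤ) - 1))) (((N : ℤ) - (m : ℤ)) * ((d : ℤ) - 1)),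
        Amat d N m p s := by
  have hmN' : m ≤ N := hmN.le
  ext i j
  have hba : wsumFirst m i ≤ m * (d - 1) := wsumFirst_le hmN' i
  have hbb : wsumLast m i ≤ (N - m) * (d - 1) := wsumLast_le hmN' i
  have hba' : wsumFirst m j ≤ m * (d - 1) := wsumFirst_le hmN' j
  have hbb' : wsumLast m j ≤ (N - m) * (d - 1) := wsumLast_le hmN' j
  have hNm : m * (d - 1) + (N - m) * (d - 1) = N * (d - 1) := by
    rw [← Nat.add_mul]; congr 1; omega
  have hL : Gamma m (dickeDiag d N p) i j =
      if wsumFirst m j + wsumLast m i = wsumFirst m i + wsumLast m j then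
        (p (wsumFirst m i + wsumLast m j) : ℂ) else 0 := by
    simp only [Gamma, Matrix.of_apply, dickeDiag, Matrix.sum_apply, Matrix.smul_apply,
      RProj, Matrix.vecMulVec_apply, Pi.star_apply, Rvec, smul_eq_mul,
      wsum_split m, wsumFirst_mix, wsumLast_mix,
      apply_ite (star : ℂ → ℂ), star_one, star_zero]
    rw [Finset.sum_eq_single (wsumFirst m i + wsumLast m j)]
    · by_cases h : wsumFirst m j + wsumLast m i = wsumFirst m i + wsumLast m j <;> simp [h]
    · intro k _ hk
      simp [Ne.symm hk]
    · intro hk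
      exfalso; apply hk
      simp only [Finset.mem_range]
      omega
  have hR : (∑ s ∈ Finset.Icc (-((m : ℤ) * ((d : ℤ) - 1)))
        (((N : ℤ) - (m : ℤ)) * ((d : ℤ) - 1)), Amat d N m p s) i j =
      if (wsumLast m j : ℤ) = (wsumFirst m j : ℤ) +
          ((wsumLast m i : ℤ) - (wsumFirst m i : ℤ)) then
        (p (wsumFirst m j + wsumLast m i) : ℂ) else 0 := by
    have hcast : ((m : ℤ) * ((d : ℤ) - 1)) = (m * (d - 1) : ℕ) := by
      push_cast [Nat.cast_sub (by omega : 1 ≤ d)]; ring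
    have hcast2 : (((N : ℤ) - (m : ℤ)) * ((d : ℤ) - 1)) = ((N - m) * (d - 1) : ℕ) := by
      push_cast [Nat.cast_sub (by omega : 1 ≤ d), Nat.cast_sub hmN']; ring
    simp only [Matrix.sum_apply, Amat, Matrix.smul_apply, Matrix.vecMulVec_apply,
      Pi.star_apply, splitVec, smul_eq_mul, apply_ite (star : ℂ → ℂ), star_one, star_zero]
    rw [Finset.sum_eq_single ((wsumLast m i : ℤ) - (wsumFirst m i : ℤ))]
    · rw [Finset.sum_eq_single ((wsumFirst m i : ℤ))]
      · rw [Finset.sum_eq_single ((wsumFirst m j : ℤ))]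
        · have h1 : ((wsumFirst m i : ℤ) = (wsumFirst m i : ℤ) ∧
              (wsumLast m i : ℤ) = (wsumFirst m i : ℤ) +
                ((wsumLast m i : ℤ) - (wsumFirst m i : ℤ))) := ⟨rfl, by ring⟩
          by_cases hc : (wsumLast m j : ℤ) = (wsumFirst m j : ℤ) +
              ((wsumLast m i : ℤ) - (wsumFirst m i : ℤ))
          · have ht : (((wsumFirst m i : ℤ)) + ((wsumFirst m j : ℤ)) +
                ((wsumLast m i : ℤ) - (wsumFirst m i : ℤ))).toNat =
                wsumFirst m j + wsumLast m i := by omega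
            rw [if_pos h1, if_pos (⟨rfl, hc⟩ : _ ∧ _), ht, if_pos hc]
            ring
          · simp [hc]
        · intro l _ hl
          simp [Ne.symm hl]
        · intro h
          have hc : ¬ ((wsumLast m j : ℤ) = (wsumFirst m j : ℤ) +
              ((wsumLast m i : ℤ) - (wsumFirst m i : ℤ))) := by
            intro hc; apply h
            simp only [Finset.mem_Icc, hcast, hcast2]
            omega
          simp [hc]
      · intro k _ hk
        apply Finset.sum_eq_zero
        intro l _
        have : ¬ ((wsumFirst m i : ℤ) = k ∧ (wsumLast m i : ℤ) =
            k + ((wsumLast m i : ℤ) - (wsumFirst m i : ℤ))) := by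
          rintro ⟨h1, -⟩; exact hk h1.symm
        simp [this]
      · intro h
        exfalso; apply h
        simp only [Finset.mem_Icc, hcast, hcast2]
        omega
    · intro s _ hs
      apply Finset.sum_eq_zero
      intro k _
      apply Finset.sum_eq_zero
      intro l _
      have : ¬ ((wsumFirst m i : ℤ) = k ∧ (wsumLast m i : ℤ) = k + s) := by
        rintro ⟨rfl, h2⟩; apply hs; omega
      simp [this]
    · intro h
      exfalso; apply h
      simp only [Finset.mem_Icc, hcast, hcast2]
      omega
  rw [hL, hR]
  by_cases h : wsumFirst m j + wsumLast m i = wsumFirst m i + wsumLast m j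
  · rw [if_pos h, if_pos (by omega)]
    have : wsumFirst m i + wsumLast m j = wsumFirst m j + wsumLast m i := by omega
    rw [this]
  · rw [if_neg h, if_neg (by omega)]

end DSym
end

section
/- Let t ≥ 0, let M = N(d−1)+1, let ω = exp(2πi/M), and for α = 0,1,…,M−1 define |α̂⟩ = Σ_{i=0}^{d−1} t^{i/2} ω^{αi} |i⟩ ∈ ℂ^d. Then (1/M) Σ_{α=0}^{M−1} (|α̂⟩⟨α̂|)^{⊗N} = Σ_{k=0}^{N(d−1)} t^k |R_{N,d;k}⟩⟨R_{N,d;k}|. -/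
open scoped BigOperators ComplexConjugate ComplexOrder Matrix
namespace DSym


lemma wsum_le {d N : ℕ} (i : Idx d N) : wsum i ≤ N * (d - 1) := by
  unfold wsum
  calc ∑ j, ((i j : ℕ)) ≤ ∑ _j : Fin N, (d - 1) :=
        Finset.sum_le_sum (fun j _ => by have := (i j).isLt; omega)
    _ = N * (d - 1) := by simp [Finset.sum_const, mul_comm]

theorem stmt13 (d N : ℕ) (hd : 2 ≤ d) (hN : 2 ≤ N) (t : ℝ) (ht : 0 ≤ t)
    (M : ℕ) (hM : M = N * (d - 1) + 1)
    (ω : ℂ) (hω : ω = Complex.exp (2 * Real.pi * Complex.I / M))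
    (vhat : ℕ → Fin d → ℂ)
    (hv : ∀ (α : ℕ) (i : Fin d), vhat α i = (Real.sqrt t : ℂ) ^ (i : ℕ) * ω ^ (α * (i : ℕ))) :
    (M : ℂ)⁻¹ • ∑ α ∈ Finset.range M, prodProj (fun _ : Fin N => vhat α)
      = ∑ k ∈ Finset.range (N * (d - 1) + 1), (t : ℂ) ^ k • RProj d N k := by

  have hMpos : 0 < M := by omega
  have hMne : M ≠ 0 := hMpos.ne'
  have hprim : IsPrimitiveRoot ω M := by
    rw [hω]; exact Complex.isPrimitiveRoot_exp M hMne
  have hωM : ω ^ M = 1 := hprim.pow_eq_one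
  have hω0 : ω ≠ 0 := hprim.ne_zero hMne
  have hconj : (starRingEnd ℂ) ω = ω⁻¹ := by
    rw [hω, ← Complex.exp_conj, ← Complex.exp_neg]
    congr 1
    rw [map_div₀, map_mul, map_mul, Complex.conj_I, Complex.conj_ofReal, map_ofNat,
      Complex.conj_natCast]
    ring
  ext i i'
  set a := wsum i with ha
  set b := wsum i' with hb
  have haM : a < M := by have := wsum_le i; omega
  have hbM : b < M := by have := wsum_le i'; omega
  have hsq : ((Real.sqrt t : ℂ)) ^ (a + a) = (t : ℂ) ^ a := by
    rw [← two_mul, pow_mul]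
    norm_cast
    rw [Real.sq_sqrt ht]
  simp only [Matrix.smul_apply, Finset.sum_apply, Matrix.sum_apply, prodProj, RProj,
    Matrix.of_apply, Matrix.vecMulVec_apply, Pi.star_apply, Rvec, smul_eq_mul,
    RCLike.star_def]
  have hterm : ∀ α ∈ Finset.range M,
      (∏ j, vhat α (i j) * (starRingEnd ℂ) (vhat α (i' j)))
        = ((Real.sqrt t : ℂ) ^ (a + b)) * (ω ^ a * (ω⁻¹) ^ b) ^ α := by
    intro α _
    simp only [hv, map_mul, map_pow, Complex.conj_ofReal, hconj]
    rw [Finset.prod_mul_distrib, Finset.prod_mul_distrib, Finset.prod_mul_distrib,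
      Finset.prod_pow_eq_pow_sum, Finset.prod_pow_eq_pow_sum,
      Finset.prod_pow_eq_pow_sum, Finset.prod_pow_eq_pow_sum,
      ← Finset.mul_sum, ← Finset.mul_sum, ha, hb]
    unfold wsum
    ring
  rw [Finset.sum_congr rfl hterm, ← Finset.mul_sum, ← hM]
  have hRHS : (∑ k ∈ Finset.range M, (t : ℂ) ^ k *
      ((if a = k then (1:ℂ) else 0) * (starRingEnd ℂ) (if b = k then (1:ℂ) else 0)))
      = if a = b then (t : ℂ) ^ a else 0 := by
    have : ∀ k, (starRingEnd ℂ) (if b = k then (1:ℂ) else 0) = if b = k then 1 else 0 := by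
      intro k; split <;> simp
    simp only [this]
    by_cases hab : a = b
    · rw [if_pos hab, hab]
      rw [Finset.sum_eq_single b]
      · simp
      · intro k _ hk
        simp [Ne.symm hk]
      · intro h
        exact absurd (Finset.mem_range.mpr hbM) h
    · rw [if_neg hab]
      apply Finset.sum_eq_zero
      intro k _
      by_cases h1 : a = k
      · have h2 : ¬ b = k := fun hbk => hab (h1.trans hbk.symm)
        simp [h2]
      · simp [h1]
  rw [hRHS]
  by_cases hab : a = b
  · rw [if_pos hab, hab]
    have hζ : ω ^ b * (ω⁻¹) ^ b = 1 := by
      rw [inv_pow]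
      exact mul_inv_cancel₀ (pow_ne_zero _ hω0)
    rw [hζ]
    simp only [one_pow, Finset.sum_const, Finset.card_range, nsmul_eq_mul, mul_one]
    have hsq' : ((Real.sqrt t : ℂ)) ^ (b + b) = (t : ℂ) ^ b := by
      rw [← two_mul, pow_mul]
      norm_cast
      rw [Real.sq_sqrt ht]
    rw [hsq']
    field_simp
  · rw [if_neg hab]
    have hζM : (ω ^ a * (ω⁻¹) ^ b) ^ M = 1 := by
      have h1 : (ω ^ a) ^ M = 1 := by rw [← pow_mul, mul_comm, pow_mul, hωM, one_pow]
      have h2 : ((ω⁻¹) ^ b) ^ M = 1 := by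
        rw [← pow_mul, mul_comm, pow_mul, inv_pow, hωM, inv_one, one_pow]
      rw [mul_pow, h1, h2, one_mul]
    have hζne : ω ^ a * (ω⁻¹) ^ b ≠ 1 := by
      intro h
      rw [inv_pow, ← div_eq_mul_inv, div_eq_one_iff_eq (pow_ne_zero _ hω0)] at h
      exact hab (hprim.pow_inj haM hbM h)
    rw [geom_sum_eq hζne, hζM]
    simp


end DSym
end
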